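/- Let |·| be a norm on ℝⁿ with induced logarithmic norm μ, let f : ℝⁿ → ℝⁿ be continuously differentiable, let X ⊆ ℝⁿ be convex, and suppose μ(Df(x)) ≤ c for every x ∈ X. Then for any two trajectories x and x' of ẋ = f(x) that remain in X on [0, T], |x(t) − x'(t)| ≤ e^{ct} |x(0) − x'(0)| for every t ∈ [0, T]. -/

import Mathlib

open Filter Topology Set Matrix MeasureTheory

/-- `N` is a norm on `ℝⁿ`. -/
def IsNorm {n : ℕ} (N : (Fin n → ℝ) → ℝ) : Prop :=
  (∀ x y, N (x + y) ≤ N x + N y) ∧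
  (∀ (a : ℝ) (x : Fin n → ℝ), N (a • x) = |a| * N x) ∧
  (∀ x, N x = 0 → x = 0)

/-- The operator norm on `ℝⁿˣⁿ` induced by the norm `N`. -/
noncomputable def opNorm {n : ℕ} (N : (Fin n → ℝ) → ℝ) (A : Matrix (Fin n) (Fin n) ℝ) : ℝ :=
  sSup ((fun x => N (A.mulVec x)) '' {x | N x = 1})

/-- The logarithmic norm `μ(A) = lim_{h → 0⁺} (‖I + hA‖ - 1)/h` induced by the norm `N`. -/
noncomputable def logNorm {n : ℕ} (N : (Fin n → ℝ) → ℝ) (A : Matrix (Fin n) (Fin n) ℝ) : ℝ :=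
  limUnder (𝓝[>] (0 : ℝ)) (fun h => (opNorm N (1 + h • A) - 1) / h)

/-- The Jacobian matrix of `f : ℝⁿ → ℝⁿ` at `x`: `(Df(x))_{ij} = ∂f_i/∂x_j(x)`. -/
noncomputable def jacMatrix {n m : ℕ} (f : (Fin n → ℝ) → (Fin m → ℝ)) (x : Fin n → ℝ) :
    Matrix (Fin m) (Fin n) ℝ :=
  fun i j => fderiv ℝ f x (Pi.single j 1) i

section Auxiliary
variable {n : ℕ} {N : (Fin n → ℝ) → ℝ}

lemma N_zero (hN : IsNorm N) : N 0 = 0 := by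
  have := hN.2.1 0 0
  simpa using this

lemma N_neg (hN : IsNorm N) (v : Fin n → ℝ) : N (-v) = N v := by
  have := hN.2.1 (-1) v
  simpa using this

lemma N_nonneg (hN : IsNorm N) (v : Fin n → ℝ) : 0 ≤ N v := by
  have h := hN.1 v (-v)
  rw [add_neg_cancel, N_zero hN, N_neg hN] at h
  linarith

lemma N_sub_le (hN : IsNorm N) (a b : Fin n → ℝ) : N a ≤ N b + N (a - b) := by
  have := hN.1 b (a - b)
  simpa using this

lemma N_sum_le (hN : IsNorm N) {ι : Type*} (s : Finset ι) (v : ι → Fin n → ℝ) :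
    N (∑ i ∈ s, v i) ≤ ∑ i ∈ s, N (v i) := by
  classical
  induction s using Finset.induction with
  | empty => simp [N_zero hN]
  | insert _ _ hx ih =>
    rw [Finset.sum_insert hx, Finset.sum_insert hx]
    exact (hN.1 _ _).trans (by linarith)

lemma N_le_norm (hN : IsNorm N) : ∃ C : ℝ, 0 < C ∧ ∀ v : Fin n → ℝ, N v ≤ C * ‖v‖ := by
  have hsum : (0:ℝ) ≤ ∑ i, N (Pi.single i 1) :=
    Finset.sum_nonneg fun i _ => N_nonneg hN _
  refine ⟨∑ i, N (Pi.single i 1) + 1, by linarith, fun v => ?_⟩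
  have hv : v = ∑ i, v i • (Pi.single i 1 : Fin n → ℝ) := by
    funext j
    simp [Finset.sum_apply, Pi.single_apply]
  have hvn : (0:ℝ) ≤ ‖v‖ := norm_nonneg v
  calc N v = N (∑ i, v i • (Pi.single i 1 : Fin n → ℝ)) := by rw [← hv]
    _ ≤ ∑ i, N (v i • (Pi.single i 1 : Fin n → ℝ)) := N_sum_le hN _ _
    _ = ∑ i, |v i| * N (Pi.single i 1) := by simp [hN.2.1]
    _ ≤ ∑ i, ‖v‖ * N (Pi.single i 1) := by
        refine Finset.sum_le_sum fun i _ => ?_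
        exact mul_le_mul_of_nonneg_right (by simpa using norm_le_pi_norm v i) (N_nonneg hN _)
    _ = (∑ i, N (Pi.single i 1)) * ‖v‖ := by rw [← Finset.mul_sum, mul_comm]
    _ ≤ (∑ i, N (Pi.single i 1) + 1) * ‖v‖ := by nlinarith

lemma N_lipschitz (hN : IsNorm N) :
    ∃ C : ℝ, 0 < C ∧ ∀ a b : Fin n → ℝ, |N a - N b| ≤ C * ‖a - b‖ := by
  obtain ⟨C, hC, h⟩ := N_le_norm hN
  refine ⟨C, hC, fun a b => ?_⟩
  rw [abs_sub_le_iff]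
  constructor
  · have h1 := N_sub_le hN a b; have h2 := h (a - b); linarith
  · have h1 := N_sub_le hN b a
    have h2 := h (b - a)
    rw [norm_sub_rev] at h2
    linarith

lemma N_continuous (hN : IsNorm N) : Continuous N := by
  obtain ⟨C, hC, h⟩ := N_lipschitz hN
  rw [Metric.continuous_iff]
  intro a ε hε
  refine ⟨ε / C, by positivity, fun b hb => ?_⟩
  rw [Real.dist_eq]
  calc |N b - N a| ≤ C * ‖b - a‖ := h b a
    _ < C * (ε / C) := by
        refine mul_lt_mul_of_pos_left ?_ hC
        simpa [dist_eq_norm] using hb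
    _ = ε := by field_simp

lemma N_pos (hN : IsNorm N) {v : Fin n → ℝ} (hv : v ≠ 0) : 0 < N v :=
  lt_of_le_of_ne (N_nonneg hN v) (fun h => hv (hN.2.2 v h.symm))

lemma norm_le_N (hN : IsNorm N) (hn : 0 < n) :
    ∃ m : ℝ, 0 < m ∧ ∀ v : Fin n → ℝ, m * ‖v‖ ≤ N v := by
  haveI : NeZero n := ⟨hn.ne'⟩
  haveI : Nontrivial (Fin n → ℝ) := ⟨0, Pi.single ⟨0, hn⟩ 1, by
    intro h
    have := congrFun h ⟨0, hn⟩
    simp at this⟩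
  obtain ⟨v₀, hv₀, hmin⟩ := (isCompact_sphere (0 : Fin n → ℝ) 1).exists_isMinOn
    (NormedSpace.sphere_nonempty.2 zero_le_one) (N_continuous hN).continuousOn
  have hv₀ne : v₀ ≠ 0 := by
    intro h
    rw [mem_sphere_iff_norm, h, sub_zero, norm_zero] at hv₀
    norm_num at hv₀
  refine ⟨N v₀, N_pos hN hv₀ne, fun v => ?_⟩
  rcases eq_or_ne v 0 with rfl | hv
  · simp [N_zero hN]
  · have hnv : (0:ℝ) < ‖v‖ := norm_pos_iff.2 hv
    have hmem : ‖v‖⁻¹ • v ∈ Metric.sphere (0 : Fin n → ℝ) 1 := by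
      simp [norm_smul, abs_of_pos (inv_pos.2 hnv), inv_mul_cancel₀ hnv.ne']
    have hle := hmin hmem
    have h2 : N (‖v‖⁻¹ • v) = ‖v‖⁻¹ * N v := by
      rw [hN.2.1, abs_of_pos (inv_pos.2 hnv)]
    have hle' : N v₀ ≤ N (‖v‖⁻¹ • v) := hle
    rw [h2] at hle'
    exact (le_div_iff₀ hnv).1 (by rwa [div_eq_inv_mul])

lemma N_convexOn (hN : IsNorm N) : ConvexOn ℝ univ N := by
  refine ⟨convex_univ, fun a _ b _ p q hp hq _ => ?_⟩
  calc N (p • a + q • b) ≤ N (p • a) + N (q • b) := hN.1 _ _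
    _ = p * N a + q * N b := by rw [hN.2.1, hN.2.1, abs_of_nonneg hp, abs_of_nonneg hq]


lemma mulVec_norm_le (A : Matrix (Fin n) (Fin n) ℝ) (v : Fin n → ℝ) :
    ‖A.mulVec v‖ ≤ (∑ i, ∑ j, |A i j|) * ‖v‖ := by
  have hnn : (0:ℝ) ≤ (∑ i, ∑ j, |A i j|) * ‖v‖ := by positivity
  rw [pi_norm_le_iff_of_nonneg hnn]
  intro i
  calc ‖A.mulVec v i‖ = |∑ j, A i j * v j| := rfl
    _ ≤ ∑ j, |A i j * v j| := Finset.abs_sum_le_sum_abs _ _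
    _ ≤ ∑ j, |A i j| * ‖v‖ := by
        refine Finset.sum_le_sum fun j _ => ?_
        rw [abs_mul]
        exact mul_le_mul_of_nonneg_left (by simpa using norm_le_pi_norm v j) (abs_nonneg _)
    _ = (∑ j, |A i j|) * ‖v‖ := by rw [Finset.sum_mul]
    _ ≤ (∑ i, ∑ j, |A i j|) * ‖v‖ := by
        refine mul_le_mul_of_nonneg_right ?_ (norm_nonneg v)
        exact Finset.single_le_sum (f := fun i => ∑ j, |A i j|)
          (fun i _ => Finset.sum_nonneg fun j _ => abs_nonneg _) (Finset.mem_univ i)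

lemma sphereN_nonempty (hN : IsNorm N) (hn : 0 < n) : {x : Fin n → ℝ | N x = 1}.Nonempty := by
  have hv : (Pi.single (⟨0, hn⟩ : Fin n) 1 : Fin n → ℝ) ≠ 0 := by
    intro h
    have := congrFun h ⟨0, hn⟩
    simp at this
  set v := (Pi.single (⟨0, hn⟩ : Fin n) 1 : Fin n → ℝ)
  have hNv : 0 < N v := N_pos hN hv
  refine ⟨(N v)⁻¹ • v, ?_⟩
  simp only [mem_setOf_eq, hN.2.1, abs_of_pos (inv_pos.2 hNv)]
  field_simp

lemma bddAbove_op (hN : IsNorm N) (hn : 0 < n) (A : Matrix (Fin n) (Fin n) ℝ) :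
    BddAbove ((fun x => N (A.mulVec x)) '' {x | N x = 1}) := by
  obtain ⟨C, hC, hCle⟩ := N_le_norm hN
  obtain ⟨m, hm, hmle⟩ := norm_le_N hN hn
  refine ⟨C * ((∑ i, ∑ j, |A i j|) * (1 / m)), ?_⟩
  rintro - ⟨x, hx, rfl⟩
  have hx1 : N x = 1 := hx
  have hxn : ‖x‖ ≤ 1 / m := by
    have := hmle x
    rw [hx1] at this
    rw [le_div_iff₀ hm]; linarith
  calc N (A.mulVec x) ≤ C * ‖A.mulVec x‖ := hCle _
    _ ≤ C * ((∑ i, ∑ j, |A i j|) * ‖x‖) :=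
        mul_le_mul_of_nonneg_left (mulVec_norm_le A x) hC.le
    _ ≤ C * ((∑ i, ∑ j, |A i j|) * (1 / m)) := by
        refine mul_le_mul_of_nonneg_left ?_ hC.le
        refine mul_le_mul_of_nonneg_left hxn ?_
        positivity

lemma le_opNorm (hN : IsNorm N) (hn : 0 < n) (A : Matrix (Fin n) (Fin n) ℝ)
    {x : Fin n → ℝ} (hx : N x = 1) : N (A.mulVec x) ≤ opNorm N A :=
  le_csSup (bddAbove_op hN hn A) ⟨x, hx, rfl⟩

lemma opNorm_le (hN : IsNorm N) (hn : 0 < n) {A : Matrix (Fin n) (Fin n) ℝ} {K : ℝ}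
    (h : ∀ x, N x = 1 → N (A.mulVec x) ≤ K) : opNorm N A ≤ K := by
  refine csSup_le ?_ ?_
  · exact (sphereN_nonempty hN hn).image _
  · rintro - ⟨x, hx, rfl⟩; exact h x hx

lemma opNorm_nonneg (hN : IsNorm N) (hn : 0 < n) (A : Matrix (Fin n) (Fin n) ℝ) :
    0 ≤ opNorm N A := by
  obtain ⟨x, hx⟩ := sphereN_nonempty hN hn
  exact (N_nonneg hN _).trans (le_opNorm hN hn A hx)

lemma N_mulVec_le (hN : IsNorm N) (hn : 0 < n) (A : Matrix (Fin n) (Fin n) ℝ)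
    (v : Fin n → ℝ) : N (A.mulVec v) ≤ opNorm N A * N v := by
  rcases eq_or_ne v 0 with rfl | hv
  · simp [Matrix.mulVec_zero, N_zero hN]
  · have hNv : 0 < N v := N_pos hN hv
    have hx : N ((N v)⁻¹ • v) = 1 := by
      rw [hN.2.1, abs_of_pos (inv_pos.2 hNv)]; field_simp
    have h := le_opNorm hN hn A hx
    rw [Matrix.mulVec_smul] at h
    rw [hN.2.1, abs_of_pos (inv_pos.2 hNv)] at h
    calc N (A.mulVec v) = N v * ((N v)⁻¹ * N (A.mulVec v)) := by field_simp
      _ ≤ N v * opNorm N A := mul_le_mul_of_nonneg_left h hNv.le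
      _ = opNorm N A * N v := mul_comm _ _

lemma opNorm_one (hN : IsNorm N) (hn : 0 < n) : opNorm N (1 : Matrix (Fin n) (Fin n) ℝ) = 1 := by
  refine le_antisymm (opNorm_le hN hn fun x hx => by rw [Matrix.one_mulVec]; exact hx.le) ?_
  obtain ⟨x, hx⟩ := sphereN_nonempty hN hn
  have := le_opNorm hN hn (1 : Matrix (Fin n) (Fin n) ℝ) hx
  rwa [Matrix.one_mulVec, hx] at this

lemma opNorm_add_le (hN : IsNorm N) (hn : 0 < n) (A B : Matrix (Fin n) (Fin n) ℝ) :
    opNorm N (A + B) ≤ opNorm N A + opNorm N B := by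
  refine opNorm_le hN hn fun x hx => ?_
  rw [Matrix.add_mulVec]
  calc N (A.mulVec x + B.mulVec x) ≤ N (A.mulVec x) + N (B.mulVec x) := hN.1 _ _
    _ ≤ opNorm N A + opNorm N B :=
        add_le_add (le_opNorm hN hn A hx) (le_opNorm hN hn B hx)

lemma opNorm_smul_le (hN : IsNorm N) (hn : 0 < n) {a : ℝ} (ha : 0 ≤ a)
    (A : Matrix (Fin n) (Fin n) ℝ) : opNorm N (a • A) ≤ a * opNorm N A := by
  refine opNorm_le hN hn fun x hx => ?_
  rw [Matrix.smul_mulVec, hN.2.1, abs_of_nonneg ha]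
  exact mul_le_mul_of_nonneg_left (le_opNorm hN hn A hx) ha

lemma one_sub_le_opNorm (hN : IsNorm N) (hn : 0 < n) (A : Matrix (Fin n) (Fin n) ℝ)
    {h : ℝ} (hh : 0 ≤ h) : 1 - h * opNorm N A ≤ opNorm N (1 + h • A) := by
  obtain ⟨x, hx⟩ := sphereN_nonempty hN hn
  have key : 1 - h * opNorm N A ≤ N ((1 + h • A).mulVec x) := by
    have h1 : N x ≤ N ((1 + h • A).mulVec x) + N ((h • A).mulVec x) := by
      have := N_sub_le hN x ((1 + h • A).mulVec x)
      have heq : x - (1 + h • A).mulVec x = -((h • A).mulVec x) := by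
        rw [Matrix.add_mulVec, Matrix.one_mulVec]; abel
      rw [heq] at this
      have hneg : N (-((h • A).mulVec x)) = N ((h • A).mulVec x) := by
        have := hN.2.1 (-1) ((h • A).mulVec x)
        simpa using this
      linarith
    have h2 : N ((h • A).mulVec x) ≤ h * opNorm N A := by
      rw [Matrix.smul_mulVec, hN.2.1, abs_of_nonneg hh]
      have := le_opNorm hN hn A hx
      exact mul_le_mul_of_nonneg_left this hh
    rw [hx] at h1
    linarith
  exact key.trans (le_opNorm hN hn _ hx)

lemma opNorm_le_matrix_norm (hN : IsNorm N) (hn : 0 < n) :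
    ∃ κ : ℝ, 0 < κ ∧ ∀ A : Matrix (Fin n) (Fin n) ℝ, opNorm N A ≤ κ * (∑ i, ∑ j, |A i j|) := by
  obtain ⟨C, hC, hCle⟩ := N_le_norm hN
  obtain ⟨m, hm, hmle⟩ := norm_le_N hN hn
  refine ⟨C / m, by positivity, fun A => ?_⟩
  refine opNorm_le hN hn fun x hx => ?_
  have hxn : ‖x‖ ≤ 1 / m := by
    have := hmle x; rw [hx] at this; rw [le_div_iff₀ hm]; linarith
  have hS : (0:ℝ) ≤ ∑ i, ∑ j, |A i j| := by positivity
  calc N (A.mulVec x) ≤ C * ‖A.mulVec x‖ := hCle _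
    _ ≤ C * ((∑ i, ∑ j, |A i j|) * ‖x‖) := mul_le_mul_of_nonneg_left (mulVec_norm_le A x) hC.le
    _ ≤ C * ((∑ i, ∑ j, |A i j|) * (1 / m)) := by
        exact mul_le_mul_of_nonneg_left (mul_le_mul_of_nonneg_left hxn hS) hC.le
    _ = C / m * (∑ i, ∑ j, |A i j|) := by field_simp

lemma opNorm_continuous (hN : IsNorm N) (hn : 0 < n) {α : Type*} [TopologicalSpace α]
    {F : α → Matrix (Fin n) (Fin n) ℝ} (hF : Continuous F) :
    Continuous fun s => opNorm N (F s) := by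
  obtain ⟨κ, hκ, hκle⟩ := opNorm_le_matrix_norm hN hn
  have key : ∀ M M' : Matrix (Fin n) (Fin n) ℝ,
      |opNorm N M - opNorm N M'| ≤ κ * (∑ i, ∑ j, |M i j - M' i j|) := by
    intro M M'
    have h1 : opNorm N M ≤ opNorm N M' + opNorm N (M - M') := by
      have := opNorm_add_le hN hn M' (M - M')
      simpa using this
    have h2 : opNorm N M' ≤ opNorm N M + opNorm N (M' - M) := by
      have := opNorm_add_le hN hn M (M' - M)
      simpa using this
    have h3 := hκle (M - M')
    have h4 := hκle (M' - M)
    have he : (∑ i, ∑ j, |(M' - M) i j|) = ∑ i, ∑ j, |M i j - M' i j| := by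
      simp [Matrix.sub_apply, abs_sub_comm]
    have he2 : (∑ i, ∑ j, |(M - M') i j|) = ∑ i, ∑ j, |M i j - M' i j| := by
      simp [Matrix.sub_apply]
    rw [he] at h4; rw [he2] at h3
    rw [abs_sub_le_iff]
    constructor <;> linarith
  rw [continuous_iff_continuousAt]
  intro a
  have hFc : Continuous fun s => κ * (∑ i, ∑ j, |F s i j - F a i j|) := by
    refine continuous_const.mul ?_
    refine continuous_finset_sum _ fun i _ => continuous_finset_sum _ fun j _ => ?_
    have : Continuous fun s => F s i j :=
      (continuous_apply j).comp ((continuous_apply i).comp hF)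
    exact (this.sub continuous_const).abs
  have h0 : Tendsto (fun s => κ * (∑ i, ∑ j, |F s i j - F a i j|)) (𝓝 a) (𝓝 0) := by
    have := hFc.continuousAt (x := a)
    rw [ContinuousAt] at this
    simpa using this
  rw [ContinuousAt, tendsto_iff_dist_tendsto_zero]
  refine squeeze_zero (fun s => dist_nonneg) (fun s => ?_) h0
  rw [Real.dist_eq]
  exact key (F s) (F a)


noncomputable def phiAux {n : ℕ} (N : (Fin n → ℝ) → ℝ) (A : Matrix (Fin n) (Fin n) ℝ) (h : ℝ) : ℝ :=
  (opNorm N (1 + h • A) - 1) / h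

lemma phiAux_antitone (hN : IsNorm N) (hn : 0 < n) (A : Matrix (Fin n) (Fin n) ℝ)
    {h₁ h₂ : ℝ} (h1 : 0 < h₁) (h12 : h₁ ≤ h₂) : phiAux N A h₁ ≤ phiAux N A h₂ := by
  have h2 : 0 < h₂ := h1.trans_le h12
  set θ := h₁ / h₂ with hθdef
  have hθ0 : 0 < θ := div_pos h1 h2
  have hθ1 : θ ≤ 1 := (div_le_one h2).2 h12
  have hM : (1 + h₁ • A : Matrix (Fin n) (Fin n) ℝ)
      = (1 - θ) • (1 : Matrix (Fin n) (Fin n) ℝ) + θ • (1 + h₂ • A) := by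
    rw [smul_add, smul_smul]
    have hth : θ * h₂ = h₁ := by rw [hθdef, div_mul_cancel₀ _ h2.ne']
    rw [hth, ← add_assoc, ← add_smul, sub_add_cancel, one_smul]
  have hle : opNorm N (1 + h₁ • A) ≤ (1 - θ) + θ * opNorm N (1 + h₂ • A) := by
    rw [hM]
    calc opNorm N ((1 - θ) • (1:Matrix (Fin n) (Fin n) ℝ) + θ • (1 + h₂ • A))
        ≤ opNorm N ((1 - θ) • (1:Matrix (Fin n) (Fin n) ℝ)) + opNorm N (θ • (1 + h₂ • A)) :=
          opNorm_add_le hN hn _ _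
      _ ≤ (1 - θ) * opNorm N (1:Matrix (Fin n) (Fin n) ℝ) + θ * opNorm N (1 + h₂ • A) :=
          add_le_add (opNorm_smul_le hN hn (by linarith) _) (opNorm_smul_le hN hn hθ0.le _)
      _ = (1 - θ) + θ * opNorm N (1 + h₂ • A) := by rw [opNorm_one hN hn, mul_one]
  rw [phiAux, phiAux, div_le_div_iff₀ h1 h2]
  have hexp : θ * h₂ = h₁ := by rw [hθdef, div_mul_cancel₀ _ h2.ne']
  have step : opNorm N (1 + h₁ • A) - 1 ≤ θ * (opNorm N (1 + h₂ • A) - 1) := by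
    have hr : θ * (opNorm N (1 + h₂ • A) - 1) = θ * opNorm N (1 + h₂ • A) - θ := by ring
    linarith
  calc (opNorm N (1 + h₁ • A) - 1) * h₂
      ≤ θ * (opNorm N (1 + h₂ • A) - 1) * h₂ := mul_le_mul_of_nonneg_right step h2.le
    _ = (opNorm N (1 + h₂ • A) - 1) * h₁ := by rw [mul_right_comm, hexp, mul_comm]

lemma phiAux_lower (hN : IsNorm N) (hn : 0 < n) (A : Matrix (Fin n) (Fin n) ℝ)
    {h : ℝ} (hh : 0 < h) : -opNorm N A ≤ phiAux N A h := by
  have := one_sub_le_opNorm hN hn A hh.le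
  rw [phiAux, le_div_iff₀ hh]
  nlinarith

lemma phiAux_bddBelow (hN : IsNorm N) (hn : 0 < n) (A : Matrix (Fin n) (Fin n) ℝ) :
    BddBelow (phiAux N A '' Ioi 0) := by
  refine ⟨-opNorm N A, ?_⟩
  rintro - ⟨h, hh, rfl⟩
  exact phiAux_lower hN hn A hh

lemma phiAux_tendsto (hN : IsNorm N) (hn : 0 < n) (A : Matrix (Fin n) (Fin n) ℝ) :
    Tendsto (phiAux N A) (𝓝[>] 0) (𝓝 (sInf (phiAux N A '' Ioi 0))) := by
  have hne : (phiAux N A '' Ioi 0).Nonempty := ⟨phiAux N A 1, 1, by norm_num, rfl⟩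
  have hbdd := phiAux_bddBelow hN hn A
  rw [Metric.tendsto_nhdsWithin_nhds]
  intro ε hε
  obtain ⟨y, ⟨h₀, hh₀, rfl⟩, hy⟩ := exists_lt_of_csInf_lt hne
    (show sInf (phiAux N A '' Ioi 0) < sInf (phiAux N A '' Ioi 0) + ε by linarith)
  refine ⟨h₀, hh₀, fun {h} hh hd => ?_⟩
  have h1 : sInf (phiAux N A '' Ioi 0) ≤ phiAux N A h := csInf_le hbdd ⟨h, hh, rfl⟩
  have h2 : phiAux N A h ≤ phiAux N A h₀ := by
    refine phiAux_antitone hN hn A hh ?_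
    rw [Real.dist_eq, sub_zero] at hd
    exact (le_abs_self h).trans hd.le
  rw [Real.dist_eq, abs_lt]
  constructor <;> linarith

lemma logNorm_eq (hN : IsNorm N) (hn : 0 < n) (A : Matrix (Fin n) (Fin n) ℝ) :
    logNorm N A = sInf (phiAux N A '' Ioi 0) :=
  (phiAux_tendsto hN hn A).limUnder_eq

lemma logNorm_consequence (hN : IsNorm N) (hn : 0 < n) {A : Matrix (Fin n) (Fin n) ℝ}
    {c ε : ℝ} (hc : logNorm N A ≤ c) (hε : 0 < ε) :
    ∃ h₀ > 0, ∀ h, 0 < h → h ≤ h₀ → opNorm N (1 + h • A) ≤ 1 + h * (c + ε) := by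
  rw [logNorm_eq hN hn] at hc
  have hne : (phiAux N A '' Ioi 0).Nonempty := ⟨phiAux N A 1, 1, by norm_num, rfl⟩
  obtain ⟨y, ⟨h₀, hh₀, rfl⟩, hy⟩ := exists_lt_of_csInf_lt hne
    (show sInf (phiAux N A '' Ioi 0) < c + ε by linarith)
  refine ⟨h₀, hh₀, fun h hh hhle => ?_⟩
  have := (phiAux_antitone hN hn A hh hhle).trans hy.le
  rw [phiAux, div_le_iff₀ hh] at this
  linarith

lemma jacMatrix_mulVec {f : (Fin n → ℝ) → (Fin n → ℝ)} (hf : ContDiff ℝ 1 f)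
    (y v : Fin n → ℝ) : (jacMatrix f y).mulVec v = fderiv ℝ f y v := by
  have hv : v = ∑ j, v j • (Pi.single j 1 : Fin n → ℝ) := by
    funext i; simp [Finset.sum_apply, Pi.single_apply]
  funext i
  rw [Matrix.mulVec]
  show ∑ j, jacMatrix f y i j * v j = _
  conv_rhs => rw [hv]
  rw [map_sum]
  rw [Finset.sum_apply]
  refine Finset.sum_congr rfl fun j _ => ?_
  rw [jacMatrix]
  simp [mul_comm]

lemma jacMatrix_continuous {f : (Fin n → ℝ) → (Fin n → ℝ)} (hf : ContDiff ℝ 1 f) :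
    Continuous fun y => jacMatrix f y := by
  have hfd : Continuous (fderiv ℝ f) := hf.continuous_fderiv one_ne_zero
  refine continuous_pi fun i => continuous_pi fun j => ?_
  exact (continuous_apply i).comp ((ContinuousLinearMap.apply ℝ (Fin n → ℝ)
    (Pi.single j 1 : Fin n → ℝ)).continuous.comp hfd)

lemma meanValue {f : (Fin n → ℝ) → (Fin n → ℝ)} (hf : ContDiff ℝ 1 f) (a b : Fin n → ℝ) :
    f a - f b = ∫ s in (0:ℝ)..1, (jacMatrix f (b + s • (a - b))).mulVec (a - b) := by
  have hγ : ∀ s : ℝ, HasDerivAt (fun s : ℝ => b + s • (a - b)) (a - b) s := by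
    intro s
    simpa using ((hasDerivAt_id s).smul_const (a - b)).const_add b
  have hg : ∀ s : ℝ, HasDerivAt (fun s => f (b + s • (a - b)))
      (fderiv ℝ f (b + s • (a - b)) (a - b)) s := by
    intro s
    exact ((hf.differentiable one_ne_zero _).hasFDerivAt.comp_hasDerivAt s (hγ s))
  have hcont : Continuous fun s : ℝ => fderiv ℝ f (b + s • (a - b)) (a - b) := by
    have h1 : Continuous fun s : ℝ => b + s • (a - b) :=
      continuous_const.add (continuous_id.smul continuous_const)
    exact ((ContinuousLinearMap.apply ℝ (Fin n → ℝ) (a - b)).continuous.comp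
      ((hf.continuous_fderiv one_ne_zero).comp h1))
  have := intervalIntegral.integral_eq_sub_of_hasDerivAt
    (f := fun s => f (b + s • (a - b))) (f' := fun s => fderiv ℝ f (b + s • (a - b)) (a - b))
    (fun s _ => hg s) (hcont.intervalIntegrable 0 1)
  have hba : b + (1:ℝ) • (a - b) = a := by rw [one_smul]; abel
  have hb0 : b + (0:ℝ) • (a - b) = b := by rw [zero_smul, add_zero]
  simp only [hba, hb0] at this
  simp only [jacMatrix_mulVec hf]
  exact this.symm

lemma jensen_step (hN : IsNorm N) (hn : 0 < n) {f : (Fin n → ℝ) → (Fin n → ℝ)}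
    (hf : ContDiff ℝ 1 f) (a b : Fin n → ℝ) {h K : ℝ}
    (hop : ∀ s ∈ Icc (0:ℝ) 1,
      opNorm N (1 + h • jacMatrix f (b + s • (a - b))) ≤ K) :
    N ((a - b) + h • (f a - f b)) ≤ K * N (a - b) := by
  set u := a - b with hu
  set v : ℝ → (Fin n → ℝ) :=
    fun s => ((1 : Matrix (Fin n) (Fin n) ℝ) + h • jacMatrix f (b + s • u)).mulVec u with hv
  have hveq : ∀ s, v s = u + h • ((jacMatrix f (b + s • u)).mulVec u) := by
    intro s
    rw [hv]
    simp only [Matrix.add_mulVec, Matrix.one_mulVec, Matrix.smul_mulVec]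
  have hvcont : Continuous v := by
    refine Continuous.matrix_mulVec ?_ continuous_const
    refine continuous_const.add (Continuous.const_smul ?_ h)
    exact (jacMatrix_continuous hf).comp
      (continuous_const.add (continuous_id.smul continuous_const))
  have hBcont : Continuous fun s : ℝ => (jacMatrix f (b + s • u)).mulVec u := by
    refine Continuous.matrix_mulVec ?_ continuous_const
    exact (jacMatrix_continuous hf).comp
      (continuous_const.add (continuous_id.smul continuous_const))
  have hint : ∫ s in (0:ℝ)..1, v s = u + h • (f a - f b) := by
    have h1 : IntervalIntegrable (fun _ : ℝ => u) volume 0 1 :=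
      intervalIntegrable_const
    have h2 : IntervalIntegrable (fun s => h • ((jacMatrix f (b + s • u)).mulVec u)) volume 0 1 :=
      (hBcont.const_smul h).intervalIntegrable 0 1
    calc ∫ s in (0:ℝ)..1, v s
        = ∫ s in (0:ℝ)..1, ((fun _ => u) s + (fun s => h • ((jacMatrix f (b + s • u)).mulVec u)) s) := by
          refine intervalIntegral.integral_congr fun s _ => hveq s
      _ = (∫ _ in (0:ℝ)..1, u) + ∫ s in (0:ℝ)..1, h • ((jacMatrix f (b + s • u)).mulVec u) :=
          intervalIntegral.integral_add h1 h2
      _ = u + h • ∫ s in (0:ℝ)..1, (jacMatrix f (b + s • u)).mulVec u := by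
          rw [intervalIntegral.integral_const, intervalIntegral.integral_smul]
          norm_num
      _ = u + h • (f a - f b) := by rw [← meanValue hf a b]
  haveI : IsProbabilityMeasure (volume.restrict (Ioc (0:ℝ) 1)) := by
    constructor
    rw [Measure.restrict_apply_univ, Real.volume_Ioc]
    norm_num
  have hIoc : (∫ s in (0:ℝ)..1, v s) = ∫ s, v s ∂(volume.restrict (Ioc (0:ℝ) 1)) := by
    rw [intervalIntegral.integral_of_le zero_le_one]
  have hvi : Integrable v (volume.restrict (Ioc (0:ℝ) 1)) := hvcont.integrableOn_Ioc
  have hNvi : Integrable (N ∘ v) (volume.restrict (Ioc (0:ℝ) 1)) :=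
    ((N_continuous hN).comp hvcont).integrableOn_Ioc
  have hjensen : N (∫ s, v s ∂(volume.restrict (Ioc (0:ℝ) 1)))
      ≤ ∫ s, N (v s) ∂(volume.restrict (Ioc (0:ℝ) 1)) :=
    (N_convexOn hN).map_integral_le (N_continuous hN).continuousOn isClosed_univ
      (Eventually.of_forall fun _ => mem_univ _) hvi hNvi
  have hmono : (∫ s, N (v s) ∂(volume.restrict (Ioc (0:ℝ) 1))) ≤ K * N u := by
    have hbd : ∀ᵐ s ∂(volume.restrict (Ioc (0:ℝ) 1)), N (v s) ≤ K * N u := by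
      rw [ae_restrict_iff' measurableSet_Ioc]
      refine Eventually.of_forall fun s hs => ?_
      have hs' : s ∈ Icc (0:ℝ) 1 := Ioc_subset_Icc_self hs
      calc N (v s) ≤ opNorm N (1 + h • jacMatrix f (b + s • u)) * N u :=
            N_mulVec_le hN hn _ u
        _ ≤ K * N u := by
            refine mul_le_mul_of_nonneg_right (hop s hs') ?_
            have h0 := hN.1 u (-u)
            have h1 : N ((-1 : ℝ) • u) = N u := by rw [hN.2.1]; norm_num
            have h2 : N (0 : Fin n → ℝ) = 0 := by
              have := hN.2.1 0 (0 : Fin n → ℝ); simpa using this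
            simp only [neg_one_smul] at h1
            rw [add_neg_cancel, h2, h1] at h0
            linarith
    calc (∫ s, N (v s) ∂(volume.restrict (Ioc (0:ℝ) 1)))
        ≤ ∫ _, K * N u ∂(volume.restrict (Ioc (0:ℝ) 1)) :=
          integral_mono_ae hNvi (integrable_const _) hbd
      _ = K * N u := by simp
  calc N (u + h • (f a - f b)) = N (∫ s, v s ∂(volume.restrict (Ioc (0:ℝ) 1))) := by
        rw [← hIoc, hint]
    _ ≤ ∫ s, N (v s) ∂(volume.restrict (Ioc (0:ℝ) 1)) := hjensen
    _ ≤ K * N u := hmono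

lemma key_estimate (hN : IsNorm N) (hn : 0 < n) {f : (Fin n → ℝ) → (Fin n → ℝ)}
    (hf : ContDiff ℝ 1 f) {X : Set (Fin n → ℝ)} (hX : Convex ℝ X) {c : ℝ}
    (hμ : ∀ y ∈ X, logNorm N (jacMatrix f y) ≤ c) {a b : Fin n → ℝ}
    (ha : a ∈ X) (hb : b ∈ X) {ε : ℝ} (hε : 0 < ε) :
    ∃ h₀ > 0, ∀ h, 0 < h → h ≤ h₀ →
      N ((a - b) + h • (f a - f b)) ≤ (1 + h * (c + ε)) * N (a - b) := by
  set B : ℝ → Matrix (Fin n) (Fin n) ℝ := fun s => jacMatrix f (b + s • (a - b)) with hB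
  have hBcont : Continuous B :=
    (jacMatrix_continuous hf).comp (continuous_const.add (continuous_id.smul continuous_const))
  have hmemX : ∀ s ∈ Icc (0:ℝ) 1, b + s • (a - b) ∈ X := by
    intro s hs
    have : b + s • (a - b) = (1 - s) • b + s • a := by
      rw [smul_sub]; module
    rw [this]
    exact hX hb ha (by linarith [hs.1, hs.2]) hs.1 (by ring)
  set U : ℕ → Set ℝ := fun k => {s | phiAux N (B s) (1 / (k + 1)) < c + ε} with hU
  have hUopen : ∀ k, IsOpen (U k) := by
    intro k
    have hco : Continuous fun s => phiAux N (B s) (1 / (k + 1 : ℝ)) := by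
      have : Continuous fun s => opNorm N (1 + (1 / (k + 1 : ℝ)) • B s) :=
        opNorm_continuous hN hn (continuous_const.add (hBcont.const_smul (1 / (k + 1 : ℝ)) : Continuous fun s => (1 / (k + 1 : ℝ)) • B s))
      exact (this.sub continuous_const).div_const _
    exact isOpen_lt hco continuous_const
  have hcover : Icc (0:ℝ) 1 ⊆ ⋃ k, U k := by
    intro s hs
    obtain ⟨h₀, hh₀, hle⟩ := logNorm_consequence hN hn (hμ _ (hmemX s hs)) (half_pos hε)
    obtain ⟨k, hk⟩ := exists_nat_one_div_lt hh₀
    refine mem_iUnion.2 ⟨k, ?_⟩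
    have hpos : (0:ℝ) < 1 / (k + 1) := by positivity
    have := hle (1 / (k + 1)) hpos hk.le
    rw [hU]
    have hphi : phiAux N (B s) (1 / (k + 1)) ≤ c + ε / 2 := by
      rw [phiAux, div_le_iff₀ hpos]
      linarith
    simp only [mem_setOf_eq]
    linarith
  obtain ⟨t, ht⟩ := isCompact_Icc.elim_finite_subcover U hUopen hcover
  have h0m : (0:ℝ) ∈ Icc (0:ℝ) 1 := by norm_num
  set k₀ := t.sup id with hk₀
  have hmono : ∀ k ∈ t, U k ⊆ U k₀ := by
    intro k hk s hs
    have hkk : k ≤ k₀ := Finset.le_sup (f := id) hk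
    rw [hU, mem_setOf_eq] at hs ⊢
    refine lt_of_le_of_lt ?_ hs
    refine phiAux_antitone hN hn (B s) (by positivity) ?_
    have : (k:ℝ) + 1 ≤ (k₀:ℝ) + 1 := by exact_mod_cast Nat.succ_le_succ hkk
    exact one_div_le_one_div_of_le (by positivity) this
  have hsub : Icc (0:ℝ) 1 ⊆ U k₀ := by
    intro s hs
    obtain ⟨k, hkmem⟩ := mem_iUnion₂.1 (ht hs)
    exact hmono k hkmem.1 hkmem.2
  refine ⟨1 / (k₀ + 1), by positivity, fun h hh hhle => ?_⟩
  refine jensen_step hN hn hf a b fun s hs => ?_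
  have hUs := hsub hs
  rw [hU, mem_setOf_eq] at hUs
  have hphi : phiAux N (B s) h ≤ phiAux N (B s) (1 / (k₀ + 1)) := phiAux_antitone hN hn (B s) hh hhle
  have : phiAux N (B s) h < c + ε := lt_of_le_of_lt hphi hUs
  rw [phiAux, div_lt_iff₀ hh] at this
  rw [hB] at *
  linarith

end Auxiliary

theorem stmt11 {n : ℕ} (N : (Fin n → ℝ) → ℝ) (hN : IsNorm N)
    (f : (Fin n → ℝ) → (Fin n → ℝ)) (hf : ContDiff ℝ 1 f)
    (X : Set (Fin n → ℝ)) (hX : Convex ℝ X) (c : ℝ)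
    (hμ : ∀ x ∈ X, logNorm N (jacMatrix f x) ≤ c)
    (T : ℝ) (hT : 0 ≤ T)
    (x x' : ℝ → Fin n → ℝ)
    (hxc : ContinuousOn x (Icc 0 T)) (hx'c : ContinuousOn x' (Icc 0 T))
    (hxd : ∀ t ∈ Ioo (0:ℝ) T, HasDerivAt x (f (x t)) t)
    (hx'd : ∀ t ∈ Ioo (0:ℝ) T, HasDerivAt x' (f (x' t)) t)
    (hxX : ∀ t ∈ Icc (0:ℝ) T, x t ∈ X) (hx'X : ∀ t ∈ Icc (0:ℝ) T, x' t ∈ X) :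
    ∀ t ∈ Icc (0:ℝ) T, N (x t - x' t) ≤ Real.exp (c * t) * N (x 0 - x' 0) := by
  rcases Nat.eq_zero_or_pos n with hn | hn
  · subst hn
    intro t ht
    have h1 : x t - x' t = 0 := Subsingleton.elim _ _
    have h2 : x 0 - x' 0 = 0 := Subsingleton.elim _ _
    rw [h1, h2, N_zero hN, mul_zero]
  set g : ℝ → ℝ := fun s => N (x s - x' s) with hg
  have hgc : ContinuousOn g (Icc 0 T) :=
    (N_continuous hN).comp_continuousOn (hxc.sub hx'c)
  have main : ∀ t₀ ∈ Ioo (0:ℝ) T, ∀ t ∈ Icc t₀ T, g t ≤ g t₀ * Real.exp (c * (t - t₀)) := by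
    intro t₀ ht₀
    have hbl := le_gronwallBound_of_liminf_deriv_right_le (f := g)
      (f' := fun s => c * g s) (a := t₀) (b := T) (δ := g t₀) (K := c) (ε := 0)
      (hgc.mono (Icc_subset_Icc ht₀.1.le le_rfl))
      ?_ le_rfl (fun s _ => by simp)
    · intro t ht
      have := hbl t ht
      rwa [gronwallBound_ε0] at this
    intro s hs r hr
    have hr' : c * g s < r := hr
    have hs' : s ∈ Ioo (0:ℝ) T := ⟨ht₀.1.trans_le hs.1, hs.2⟩
    have hsIcc : s ∈ Icc (0:ℝ) T := ⟨hs'.1.le, hs'.2.le⟩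
    set u := x s - x' s with hu
    set w := f (x s) - f (x' s) with hw
    have hud : HasDerivAt (fun z => x z - x' z) w s := (hxd s hs').sub (hx'd s hs')
    have hslope : Tendsto (fun z => (z - s)⁻¹ • (x z - x' z - u)) (𝓝[>] s) (𝓝 w) := by
      have := hasDerivAt_iff_tendsto_slope.1 hud
      exact this.mono_left (nhdsWithin_mono s fun z hz => ne_of_gt hz)
    have hNslope : Tendsto (fun z => N ((z - s)⁻¹ • (x z - x' z - u) - w)) (𝓝[>] s) (𝓝 0) := by
      have hc : Continuous fun y => N (y - w) := (N_continuous hN).comp (continuous_id.sub continuous_const)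
      have h0 : N (w - w) = 0 := by rw [sub_self, N_zero hN]
      have := (hc.tendsto w).comp hslope
      rwa [h0] at this
    have hεpos : 0 < r - c * g s := by linarith [hr']
    set ε := r - c * g s with hε
    set ε' := ε / (2 * (N u + 1)) with hε'
    have hε'pos : 0 < ε' := by
      have := N_nonneg hN u
      rw [hε']
      positivity
    obtain ⟨h₀, hh₀, hkey⟩ := key_estimate hN hn hf hX hμ (hxX s hsIcc) (hx'X s hsIcc) hε'pos
    have hev1 : ∀ᶠ z in 𝓝[>] s, z ∈ Ioo s (s + h₀) :=
      Ioo_mem_nhdsGT_of_mem ⟨le_rfl, lt_add_of_pos_right s hh₀⟩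
    have hev2 : ∀ᶠ z in 𝓝[>] s, N ((z - s)⁻¹ • (x z - x' z - u) - w) < ε / 2 := by
      have := hNslope (Iio_mem_nhds (show (0:ℝ) < ε / 2 by linarith))
      exact this
    refine ((hev1.and hev2).mono fun z hz => ?_).frequently
    obtain ⟨⟨hz1, hz2⟩, hz3⟩ := hz
    have hhpos : 0 < z - s := by linarith
    have hhle : z - s ≤ h₀ := by linarith
    have hstep1 : g z ≤ N (u + (z - s) • w) + N (x z - x' z - u - (z - s) • w) := by
      have h5 := N_sub_le hN (x z - x' z) (u + (z - s) • w)
      have heq : x z - x' z - (u + (z - s) • w) = x z - x' z - u - (z - s) • w := by abel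
      rw [heq] at h5
      exact h5
    have hstep2 : N (x z - x' z - u - (z - s) • w)
        = (z - s) * N ((z - s)⁻¹ • (x z - x' z - u) - w) := by
      have heq : (z - s) • ((z - s)⁻¹ • (x z - x' z - u) - w)
          = x z - x' z - u - (z - s) • w := by
        rw [smul_sub, smul_smul, mul_inv_cancel₀ hhpos.ne', one_smul]
      rw [← heq, hN.2.1, abs_of_pos hhpos]
    have hstep3 : N (u + (z - s) • w) ≤ (1 + (z - s) * (c + ε')) * N u := hkey _ hhpos hhle
    have hNu : g s = N u := rfl
    have hNu0 : 0 ≤ N u := N_nonneg hN u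
    have hε'Nu : ε' * N u < ε / 2 := by
      rw [hε', div_mul_eq_mul_div, div_lt_div_iff₀ (by positivity) (by norm_num)]
      nlinarith
    have h3 : (z - s) * N ((z - s)⁻¹ • (x z - x' z - u) - w) ≤ (z - s) * (ε / 2) :=
      mul_le_mul_of_nonneg_left hz3.le hhpos.le
    have h4 : (1 + (z - s) * (c + ε')) * N u = N u + (z - s) * (c + ε') * N u := by ring
    have hq : g z - g s ≤ (z - s) * (c + ε') * N u + (z - s) * (ε / 2) := by
      rw [hstep2] at hstep1
      rw [hNu]
      linarith
    have hfin : (z - s)⁻¹ * (g z - g s) ≤ (c + ε') * N u + ε / 2 := by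
      rw [inv_mul_le_iff₀ hhpos]
      calc g z - g s ≤ (z - s) * (c + ε') * N u + (z - s) * (ε / 2) := hq
        _ = (z - s) * ((c + ε') * N u + ε / 2) := by ring
    refine lt_of_le_of_lt hfin ?_
    have hx5 : (c + ε') * N u = c * N u + ε' * N u := by ring
    have hcg : c * N u = c * g s := by rw [hNu]
    rw [hx5]
    linarith [hε'Nu, hεpos, hr', hcg, hε]
  intro t ht
  rcases eq_or_lt_of_le ht.1 with ht0 | ht0
  · rw [← ht0, mul_zero, Real.exp_zero, one_mul]
  · have htT : t ≤ T := ht.2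
    have hF : 𝓝[Ioo (0:ℝ) t] 0 ≤ 𝓝[Icc (0:ℝ) T] 0 :=
      nhdsWithin_mono 0 (fun z hz => ⟨hz.1.le, hz.2.le.trans htT⟩)
    haveI hFne : (𝓝[Ioo (0:ℝ) t] 0).NeBot := by
      rw [← mem_closure_iff_nhdsWithin_neBot, closure_Ioo (ne_of_lt ht0)]
      exact ⟨le_rfl, ht0.le⟩
    have htend : Tendsto (fun t₀ => g t₀ * Real.exp (c * (t - t₀))) (𝓝[Ioo (0:ℝ) t] 0)
        (𝓝 (g 0 * Real.exp (c * t))) := by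
      have h1 : Tendsto g (𝓝[Ioo (0:ℝ) t] 0) (𝓝 (g 0)) := by
        have := hgc 0 ⟨le_rfl, hT⟩
        exact this.tendsto.mono_left hF
      have h2 : Tendsto (fun t₀ : ℝ => Real.exp (c * (t - t₀))) (𝓝[Ioo (0:ℝ) t] 0)
          (𝓝 (Real.exp (c * t))) := by
        have hcont : Continuous fun t₀ : ℝ => Real.exp (c * (t - t₀)) := by continuity
        have := hcont.tendsto 0
        rw [sub_zero] at this
        exact this.mono_left nhdsWithin_le_nhds
      exact h1.mul h2
    have hev : ∀ᶠ t₀ in 𝓝[Ioo (0:ℝ) t] 0, g t ≤ g t₀ * Real.exp (c * (t - t₀)) := by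
      filter_upwards [eventually_mem_nhdsWithin] with t₀ ht₀
      exact main t₀ ⟨ht₀.1, ht₀.2.trans_le htT⟩ t ⟨ht₀.2.le, htT⟩
    have := ge_of_tendsto htend hev
    rw [mul_comm] at this
    exact this
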